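/- Let (a, b) : [0,∞) → ℝ² solve a' = -b²/2, b' = -2ab with initial data satisfying |b(0)| ≤ 2a(0) and a(0) ≥ 0. Then the solution is globally bounded: a(t)² + b(t)² ≤ a(0)² + b(0)² for all t ≥ 0 (in particular a is nonincreasing and 4a² - b² = 4a(0)² - b(0)² is conserved with the sector |b| ≤ 2a invariant). -/

import Mathlib

/-- If `w' = -c w` on `[0,∞)` and `B' = c` everywhere, then `w · exp B` is constant
on `[0,∞)`. -/
lemma stmt_18_aux (w c B : ℝ → ℝ) (hB : ∀ s : ℝ, HasDerivAt B (c s) s)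
    (hw : ∀ s : ℝ, 0 ≤ s → HasDerivAt w (-(c s) * w s) s) :
    ∀ t : ℝ, 0 ≤ t → w t * Real.exp (B t) = w 0 * Real.exp (B 0) := by
  intro t ht
  have hderiv : ∀ s : ℝ, 0 ≤ s →
      HasDerivAt (fun s => w s * Real.exp (B s)) 0 s := by
    intro s hs
    have h : HasDerivAt (fun s => w s * Real.exp (B s)) _ s := (hw s hs).mul ((hB s).exp)
    convert h using 1
    ring
  have hcont : ContinuousOn (fun s => w s * Real.exp (B s)) (Set.Icc 0 t) :=
    fun s hs => ((hderiv s hs.1).continuousAt).continuousWithinAt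
  exact constant_of_has_deriv_right_zero hcont
    (fun s hs => ((hderiv s hs.1).hasDerivWithinAt)) t (Set.mem_Icc.2 ⟨ht, le_refl t⟩)

theorem stmt_18 (a b : ℝ → ℝ)
    (ha : ∀ t : ℝ, 0 ≤ t → HasDerivAt a (-(b t)^2 / 2) t)
    (hb : ∀ t : ℝ, 0 ≤ t → HasDerivAt b (-2 * a t * b t) t)
    (hsec : |b 0| ≤ 2 * a 0) (ha0 : 0 ≤ a 0) :
    (∀ t : ℝ, 0 ≤ t → (a t)^2 + (b t)^2 ≤ (a 0)^2 + (b 0)^2) ∧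
    AntitoneOn a (Set.Ici 0) ∧
    (∀ t : ℝ, 0 ≤ t →
      4 * (a t)^2 - (b t)^2 = 4 * (a 0)^2 - (b 0)^2 ∧ |b t| ≤ 2 * a t) := by
  -- continuous extension of b to all of ℝ
  have hbc : ContinuousOn b (Set.Ici 0) :=
    fun s hs => ((hb s hs).continuousAt).continuousWithinAt
  set c : ℝ → ℝ := fun s => b (max s 0) with hc
  have hcc : Continuous c :=
    hbc.comp_continuous (continuous_id.max continuous_const) fun x => Set.mem_Ici.2 (le_max_right _ _)
  have hceq : ∀ s : ℝ, 0 ≤ s → c s = b s := fun s hs => by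
    simp [hc, max_eq_left hs]
  set B : ℝ → ℝ := fun s => ∫ x in (0:ℝ)..s, c x with hBdef
  have hBd : ∀ s : ℝ, HasDerivAt B (c s) s := fun s =>
    (hcc.integral_hasStrictDerivAt 0 s).hasDerivAt
  have hB0 : B 0 = 0 := by simp [hBdef]
  -- u = 2a+b, v = 2a-b
  have hu : ∀ s : ℝ, 0 ≤ s →
      HasDerivAt (fun s => 2 * a s + b s) (-(c s) * (2 * a s + b s)) s := by
    intro s hs
    have h : HasDerivAt (fun s => 2 * a s + b s) _ s := ((ha s hs).const_mul 2).add (hb s hs)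
    convert h using 1
    rw [hceq s hs]; ring
  have hv : ∀ s : ℝ, 0 ≤ s →
      HasDerivAt (fun s => 2 * a s - b s) (-(-(c s)) * (2 * a s - b s)) s := by
    intro s hs
    have h : HasDerivAt (fun s => 2 * a s - b s) _ s := ((ha s hs).const_mul 2).sub (hb s hs)
    convert h using 1
    rw [hceq s hs]; ring
  have key_u := stmt_18_aux (fun s => 2 * a s + b s) c B hBd hu
  have key_v := stmt_18_aux (fun s => 2 * a s - b s) (fun s => -(c s)) (fun s => -(B s))
    (fun s => (hBd s).neg) hv
  -- positivity of u and v, conservation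
  have hu0 : 0 ≤ 2 * a 0 + b 0 := by
    have := abs_le.mp hsec; linarith [this.1]
  have hv0 : 0 ≤ 2 * a 0 - b 0 := by
    have := abs_le.mp hsec; linarith [this.2]
  have hupos : ∀ t : ℝ, 0 ≤ t → 0 ≤ 2 * a t + b t := by
    intro t ht
    have h := key_u t ht
    simp only [hB0, Real.exp_zero, mul_one] at h
    have he : 0 < Real.exp (B t) := Real.exp_pos _
    nlinarith
  have hvpos : ∀ t : ℝ, 0 ≤ t → 0 ≤ 2 * a t - b t := by
    intro t ht
    have h := key_v t ht
    simp only [hB0, neg_zero, Real.exp_zero, mul_one] at h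
    have he : 0 < Real.exp (-(B t)) := Real.exp_pos _
    nlinarith
  have hcons : ∀ t : ℝ, 0 ≤ t →
      4 * (a t)^2 - (b t)^2 = 4 * (a 0)^2 - (b 0)^2 := by
    intro t ht
    have h1 := key_u t ht
    have h2 := key_v t ht
    simp only [hB0, neg_zero, Real.exp_zero, mul_one] at h1 h2
    have hmul := congrArg₂ (· * ·) h1 h2
    have he : Real.exp (B t) * Real.exp (-(B t)) = 1 := by
      rw [← Real.exp_add]; simp
    nlinarith [hmul]
  have hsect : ∀ t : ℝ, 0 ≤ t → |b t| ≤ 2 * a t := by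
    intro t ht
    exact abs_le.mpr ⟨by linarith [hupos t ht], by linarith [hvpos t ht]⟩
  -- a is nonincreasing
  have hanti : AntitoneOn a (Set.Ici 0) := by
    have hcont : ContinuousOn a (Set.Ici 0) :=
      fun s hs => ((ha s hs).continuousAt).continuousWithinAt
    apply antitoneOn_of_deriv_nonpos (convex_Ici 0) hcont
    · intro x hx
      rw [interior_Ici] at hx
      exact ((ha x (le_of_lt hx)).differentiableAt).differentiableWithinAt
    · intro x hx
      rw [interior_Ici] at hx
      rw [(ha x (le_of_lt hx)).deriv]
      nlinarith [sq_nonneg (b x)]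
  refine ⟨?_, hanti, fun t ht => ⟨hcons t ht, hsect t ht⟩⟩
  intro t ht
  have h1 : a t ≤ a 0 := hanti (Set.mem_Ici.2 le_rfl) (Set.mem_Ici.2 ht) ht
  have h2 : 0 ≤ a t := by
    have := hsect t ht; have := abs_nonneg (b t); linarith
  have h3 := hcons t ht
  nlinarith
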